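/- Define M(z) = (1/(πz))E(16z) − ((1−16z)/(2πz))K(16z) − 1/(4z), where K and E are the complete elliptic integrals of the first and second kind (as functions of the parameter m). Then M satisfies the linear ODE z²(1−16z)M''(z) + z(3−32z)M'(z) + (1−4z)M(z) = 1. -/

import Mathlib

open Real intervalIntegral

noncomputable def ellipticK (m : ℝ) : ℝ :=
  ∫ θ in (0:ℝ)..(Real.pi / 2), (Real.sqrt (1 - m * Real.sin θ ^ 2))⁻¹

noncomputable def ellipticE (m : ℝ) : ℝ :=
  ∫ θ in (0:ℝ)..(Real.pi / 2), Real.sqrt (1 - m * Real.sin θ ^ 2)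

noncomputable def genFnM (z : ℝ) : ℝ :=
  (1 / (Real.pi * z)) * ellipticE (16 * z) -
    ((1 - 16 * z) / (2 * Real.pi * z)) * ellipticK (16 * z) - 1 / (4 * z)


open MeasureTheory Metric

lemma delta_sq_pos {m : ℝ} (hm : m < 1) (θ : ℝ) : 0 < 1 - m * Real.sin θ ^ 2 := by
  rcases le_or_gt m 0 with h | h
  · nlinarith [sq_nonneg (Real.sin θ)]
  · nlinarith [Real.sin_sq_le_one θ]

lemma cont_delta (m : ℝ) : Continuous fun θ : ℝ => Real.sqrt (1 - m * Real.sin θ ^ 2) :=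
  (continuous_const.sub (continuous_const.mul (Real.continuous_sin.pow 2))).sqrt

lemma delta_pos {m : ℝ} (hm : m < 1) (θ : ℝ) : 0 < Real.sqrt (1 - m * Real.sin θ ^ 2) :=
  Real.sqrt_pos.2 (delta_sq_pos hm θ)

lemma hasDerivAt_inner (m θ : ℝ) :
    HasDerivAt (fun m : ℝ => 1 - m * Real.sin θ ^ 2) (-(Real.sin θ ^ 2)) m := by
  simpa using ((hasDerivAt_id m).mul_const (Real.sin θ ^ 2)).const_sub 1

lemma hasDerivAt_sqrtDelta {m : ℝ} (hm : m < 1) (θ : ℝ) :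
    HasDerivAt (fun m : ℝ => Real.sqrt (1 - m * Real.sin θ ^ 2))
      (-(Real.sin θ ^ 2) / (2 * Real.sqrt (1 - m * Real.sin θ ^ 2))) m := by
  have h := (Real.hasDerivAt_sqrt (ne_of_gt (delta_sq_pos hm θ))).comp m (hasDerivAt_inner m θ)
  refine h.congr_deriv ?_
  symm
  field_simp

lemma hasDerivAt_invDelta {m : ℝ} (hm : m < 1) (θ : ℝ) :
    HasDerivAt (fun m : ℝ => (Real.sqrt (1 - m * Real.sin θ ^ 2))⁻¹)
      (Real.sin θ ^ 2 / (2 * Real.sqrt (1 - m * Real.sin θ ^ 2) ^ 3)) m := by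
  have h := (hasDerivAt_sqrtDelta hm θ).inv (ne_of_gt (delta_pos hm θ))
  refine h.congr_deriv ?_
  symm
  have hp := delta_pos hm θ
  rw [div_eq_div_iff (by positivity) (by positivity)]
  field_simp [hp.ne']

lemma ball_bound {m₀ : ℝ} (hm : m₀ < 1) :
    ∃ ε > (0:ℝ), ∃ c > (0:ℝ), ∀ x ∈ ball m₀ ε, x < 1 ∧ ∀ θ : ℝ, c ≤ 1 - x * Real.sin θ ^ 2 := by
  refine ⟨(1 - m₀) / 2, by linarith, min 1 ((1 - m₀) / 2), lt_min one_pos (by linarith), fun x hx => ?_⟩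
  rw [mem_ball, Real.dist_eq, abs_lt] at hx
  constructor
  · linarith [hx.2]
  · intro θ
    have hs0 : (0:ℝ) ≤ Real.sin θ ^ 2 := sq_nonneg _
    have hs1 : Real.sin θ ^ 2 ≤ 1 := Real.sin_sq_le_one θ
    rcases le_or_gt x 0 with h | h
    · have : x * Real.sin θ ^ 2 ≤ 0 := mul_nonpos_of_nonpos_of_nonneg h hs0
      calc min 1 ((1 - m₀)/2) ≤ 1 := min_le_left _ _
        _ ≤ 1 - x * Real.sin θ ^ 2 := by linarith
    · have : x * Real.sin θ ^ 2 ≤ x := by nlinarith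
      calc min 1 ((1 - m₀)/2) ≤ (1 - m₀)/2 := min_le_right _ _
        _ ≤ 1 - x * Real.sin θ ^ 2 := by linarith [hx.2]

lemma hasDerivAt_ellipticE_int {m₀ : ℝ} (hm : m₀ < 1) :
    HasDerivAt ellipticE
      (∫ θ in (0:ℝ)..(Real.pi/2), -(Real.sin θ ^ 2) / (2 * Real.sqrt (1 - m₀ * Real.sin θ ^ 2))) m₀ := by
  obtain ⟨ε, hε, c, hc, hball⟩ := ball_bound hm
  have hsc : 0 < Real.sqrt c := Real.sqrt_pos.2 hc
  have h := intervalIntegral.hasDerivAt_integral_of_dominated_loc_of_deriv_le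
    (F := fun x θ => Real.sqrt (1 - x * Real.sin θ ^ 2))
    (F' := fun x θ => -(Real.sin θ ^ 2) / (2 * Real.sqrt (1 - x * Real.sin θ ^ 2)))
    (bound := fun _ => 1 / (2 * Real.sqrt c)) (a := 0) (b := Real.pi/2) (μ := volume) (ball_mem_nhds m₀ hε)
    (Filter.Eventually.of_forall fun x => (cont_delta x).aestronglyMeasurable)
    ((cont_delta m₀).intervalIntegrable _ _)
    ?_ ?_ intervalIntegrable_const ?_
  · exact h.2
  · refine (Continuous.div (by fun_prop) (continuous_const.mul (cont_delta m₀)) ?_).aestronglyMeasurable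
    intro θ
    have := delta_pos hm θ
    exact mul_ne_zero two_ne_zero this.ne'
  · refine Filter.Eventually.of_forall fun t _ x hx => ?_
    obtain ⟨hx1, hx2⟩ := hball x hx
    have hcu : Real.sqrt c ≤ Real.sqrt (1 - x * Real.sin t ^ 2) := Real.sqrt_le_sqrt (hx2 t)
    have hu : 0 < Real.sqrt (1 - x * Real.sin t ^ 2) := delta_pos hx1 t
    rw [Real.norm_eq_abs, abs_div, abs_neg, abs_of_nonneg (sq_nonneg _),
      abs_of_pos (by positivity)]
    apply div_le_div₀ (by positivity) (Real.sin_sq_le_one t) (by positivity)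
    linarith
  · exact Filter.Eventually.of_forall fun t _ x hx => hasDerivAt_sqrtDelta (hball x hx).1 t

lemma hasDerivAt_ellipticK_int {m₀ : ℝ} (hm : m₀ < 1) :
    HasDerivAt ellipticK
      (∫ θ in (0:ℝ)..(Real.pi/2), Real.sin θ ^ 2 / (2 * Real.sqrt (1 - m₀ * Real.sin θ ^ 2) ^ 3)) m₀ := by
  obtain ⟨ε, hε, c, hc, hball⟩ := ball_bound hm
  have hsc : 0 < Real.sqrt c := Real.sqrt_pos.2 hc
  have hcont : ∀ x : ℝ, x < 1 → Continuous fun θ : ℝ => (Real.sqrt (1 - x * Real.sin θ ^ 2))⁻¹ :=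
    fun x hx => (cont_delta x).inv₀ fun θ => (delta_pos hx θ).ne'
  have h := intervalIntegral.hasDerivAt_integral_of_dominated_loc_of_deriv_le
    (F := fun x θ => (Real.sqrt (1 - x * Real.sin θ ^ 2))⁻¹)
    (F' := fun x θ => Real.sin θ ^ 2 / (2 * Real.sqrt (1 - x * Real.sin θ ^ 2) ^ 3))
    (bound := fun _ => 1 / (2 * Real.sqrt c ^ 3)) (a := 0) (b := Real.pi/2) (μ := volume) (x₀ := m₀) (ball_mem_nhds m₀ hε)
    ?_ ((hcont m₀ hm).intervalIntegrable _ _) ?_ ?_ intervalIntegrable_const ?_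
  · exact h.2
  · filter_upwards [ball_mem_nhds m₀ hε] with x hx
    exact ((cont_delta x).inv₀ fun θ => (delta_pos (hball x hx).1 θ).ne').aestronglyMeasurable
  · refine (Continuous.div (by fun_prop)
      (continuous_const.mul ((cont_delta m₀).pow 3)) ?_).aestronglyMeasurable
    intro θ
    have := delta_pos hm θ
    exact mul_ne_zero two_ne_zero (pow_ne_zero 3 this.ne')
  · refine Filter.Eventually.of_forall fun t _ x hx => ?_
    obtain ⟨hx1, hx2⟩ := hball x hx
    have hcu : Real.sqrt c ≤ Real.sqrt (1 - x * Real.sin t ^ 2) := Real.sqrt_le_sqrt (hx2 t)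
    have hu : 0 < Real.sqrt (1 - x * Real.sin t ^ 2) := delta_pos hx1 t
    rw [Real.norm_eq_abs, abs_div, abs_of_nonneg (sq_nonneg _), abs_of_pos (by positivity)]
    apply div_le_div₀ (by positivity) (Real.sin_sq_le_one t) (by positivity)
    have : Real.sqrt c ^ 3 ≤ Real.sqrt (1 - x * Real.sin t ^ 2) ^ 3 := by
      apply pow_le_pow_left₀ hsc.le hcu
    linarith
  · exact Filter.Eventually.of_forall fun t _ x hx => hasDerivAt_invDelta (hball x hx).1 t

lemma ellipticE_deriv_eq {m : ℝ} (hm : m < 1) (hm0 : m ≠ 0) :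
    (∫ θ in (0:ℝ)..(Real.pi/2), -(Real.sin θ ^ 2) / (2 * Real.sqrt (1 - m * Real.sin θ ^ 2)))
      = (ellipticE m - ellipticK m) / (2 * m) := by
  have hint1 : IntervalIntegrable (fun θ : ℝ => Real.sqrt (1 - m * Real.sin θ ^ 2)) volume 0 (Real.pi/2) :=
    (cont_delta m).intervalIntegrable _ _
  have hint2 : IntervalIntegrable (fun θ : ℝ => (Real.sqrt (1 - m * Real.sin θ ^ 2))⁻¹) volume 0 (Real.pi/2) :=
    ((cont_delta m).inv₀ fun θ => (delta_pos hm θ).ne').intervalIntegrable _ _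
  have hpt : ∀ θ ∈ Set.uIcc (0:ℝ) (Real.pi/2),
      -(Real.sin θ ^ 2) / (2 * Real.sqrt (1 - m * Real.sin θ ^ 2)) =
      (Real.sqrt (1 - m * Real.sin θ ^ 2) - (Real.sqrt (1 - m * Real.sin θ ^ 2))⁻¹) / (2 * m) := by
    intro θ _
    have hu := delta_sq_pos hm θ
    have hd := delta_pos hm θ
    have hsq : Real.sqrt (1 - m * Real.sin θ ^ 2) ^ 2 = 1 - m * Real.sin θ ^ 2 :=
      Real.sq_sqrt hu.le
    rw [div_eq_div_iff (by positivity) (by positivity)]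
    rw [sub_mul, inv_mul_eq_div, mul_div_assoc, div_self hd.ne', mul_one]
    linear_combination -2 * hsq
  rw [intervalIntegral.integral_congr hpt]
  rw [intervalIntegral.integral_div, intervalIntegral.integral_sub hint1 hint2]
  rfl

lemma ellipticK_deriv_eq {m : ℝ} (hm : m < 1) (hm0 : m ≠ 0) :
    (∫ θ in (0:ℝ)..(Real.pi/2), Real.sin θ ^ 2 / (2 * Real.sqrt (1 - m * Real.sin θ ^ 2) ^ 3))
      = (ellipticE m - (1 - m) * ellipticK m) / (2 * m * (1 - m)) := by
  set G : ℝ → ℝ := fun θ =>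
    ((Real.cos θ ^ 2 - Real.sin θ ^ 2) * (1 - m * Real.sin θ ^ 2)
      + m * Real.sin θ ^ 2 * Real.cos θ ^ 2) / Real.sqrt (1 - m * Real.sin θ ^ 2) ^ 3 with hG
  have hGcont : Continuous G := by
    apply Continuous.div (by fun_prop) ((cont_delta m).pow 3)
    intro θ
    have := delta_pos hm θ
    exact pow_ne_zero 3 this.ne'
  have hgderiv : ∀ θ : ℝ, HasDerivAt
      (fun θ => Real.sin θ * Real.cos θ / Real.sqrt (1 - m * Real.sin θ ^ 2)) (G θ) θ := by
    intro θ
    have hu := delta_sq_pos hm θ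
    have hd := delta_pos hm θ
    have hsq : Real.sqrt (1 - m * Real.sin θ ^ 2) ^ 2 = 1 - m * Real.sin θ ^ 2 :=
      Real.sq_sqrt hu.le
    have h1 : HasDerivAt (fun θ => Real.sin θ * Real.cos θ)
        (Real.cos θ * Real.cos θ + Real.sin θ * -Real.sin θ) θ :=
      (Real.hasDerivAt_sin θ).mul (Real.hasDerivAt_cos θ)
    have h2 : HasDerivAt (fun θ : ℝ => 1 - m * Real.sin θ ^ 2)
        (-(m * (2 * Real.sin θ ^ 1 * Real.cos θ))) θ := by
      simpa using (((Real.hasDerivAt_sin θ).pow 2).const_mul m).const_sub 1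
    have h3 := (Real.hasDerivAt_sqrt hu.ne').comp θ h2
    have h4 := h1.div h3 hd.ne'
    refine h4.congr_deriv ?_
    symm
    rw [hG]
    simp only [Function.comp]
    set d := Real.sqrt (1 - m * Real.sin θ ^ 2) with hdd
    rw [show 1 - m * Real.sin θ ^ 2 = d ^ 2 from hsq.symm]
    field_simp
    ring
  have hGint : (∫ θ in (0:ℝ)..(Real.pi/2), G θ) = 0 := by
    rw [intervalIntegral.integral_eq_sub_of_hasDerivAt (fun θ _ => hgderiv θ)
      (hGcont.intervalIntegrable _ _)]
    simp
  have hint1 : IntervalIntegrable (fun θ : ℝ => Real.sqrt (1 - m * Real.sin θ ^ 2)) volume 0 (Real.pi/2) :=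
    (cont_delta m).intervalIntegrable _ _
  have hint2 : IntervalIntegrable (fun θ : ℝ => (Real.sqrt (1 - m * Real.sin θ ^ 2))⁻¹) volume 0 (Real.pi/2) :=
    ((cont_delta m).inv₀ fun θ => (delta_pos hm θ).ne').intervalIntegrable _ _
  have hm1 : (1:ℝ) - m ≠ 0 := by linarith
  have hpt : ∀ θ ∈ Set.uIcc (0:ℝ) (Real.pi/2),
      Real.sin θ ^ 2 / (2 * Real.sqrt (1 - m * Real.sin θ ^ 2) ^ 3) =
      (Real.sqrt (1 - m * Real.sin θ ^ 2) - (1 - m) * (Real.sqrt (1 - m * Real.sin θ ^ 2))⁻¹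
        - m * G θ) / (2 * m * (1 - m)) := by
    intro θ _
    have hu := delta_sq_pos hm θ
    have hd := delta_pos hm θ
    have hsq : Real.sqrt (1 - m * Real.sin θ ^ 2) ^ 2 = 1 - m * Real.sin θ ^ 2 :=
      Real.sq_sqrt hu.le
    have hpy : Real.cos θ ^ 2 = 1 - Real.sin θ ^ 2 := Real.cos_sq' θ
    rw [hG]
    simp only
    rw [hpy]
    set d := Real.sqrt (1 - m * Real.sin θ ^ 2) with hdd
    rw [show 1 - m * Real.sin θ ^ 2 = d ^ 2 from hsq.symm]
    rw [div_eq_div_iff (by positivity) (by positivity)]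
    field_simp
    linear_combination (-(d ^ 2 + m * Real.sin θ ^ 2)) * hsq
  rw [intervalIntegral.integral_congr hpt, intervalIntegral.integral_div]
  rw [intervalIntegral.integral_sub (hint1.sub (hint2.const_mul (1-m)))
      ((hGcont.intervalIntegrable _ _).const_mul m),
    intervalIntegral.integral_sub hint1 (hint2.const_mul (1-m)),
    intervalIntegral.integral_const_mul, intervalIntegral.integral_const_mul, hGint]
  simp [ellipticE, ellipticK]

lemma hasDerivAt_E {m : ℝ} (hm : m < 1) (hm0 : m ≠ 0) :
    HasDerivAt ellipticE ((ellipticE m - ellipticK m) / (2 * m)) m := by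
  have h := hasDerivAt_ellipticE_int hm
  rwa [ellipticE_deriv_eq hm hm0] at h

lemma hasDerivAt_K {m : ℝ} (hm : m < 1) (hm0 : m ≠ 0) :
    HasDerivAt ellipticK ((ellipticE m - (1 - m) * ellipticK m) / (2 * m * (1 - m))) m := by
  have h := hasDerivAt_ellipticK_int hm
  rwa [ellipticK_deriv_eq hm hm0] at h

noncomputable def MD1 (z : ℝ) : ℝ :=
  (-3 * ellipticE (16*z) + (1 - 16*z) * ellipticK (16*z)) / (4 * Real.pi * z^2) + 1/(4*z^2)

noncomputable def MD2 (z : ℝ) : ℝ :=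
  (5 * ellipticE (16*z) + (24*z - 1) * ellipticK (16*z)) / (4 * Real.pi * z^3) - 1/(2*z^3)

section assemble
variable {z : ℝ}

lemma basicderivs (hz : z ≠ 0) (hz' : 16 * z < 1) :
    HasDerivAt (fun z : ℝ => ellipticE (16*z))
        ((ellipticE (16*z) - ellipticK (16*z)) / (2*(16*z)) * 16) z ∧
      HasDerivAt (fun z : ℝ => ellipticK (16*z))
        ((ellipticE (16*z) - (1 - 16*z) * ellipticK (16*z)) / (2*(16*z)*(1 - 16*z)) * 16) z := by
  have hm0 : (16:ℝ)*z ≠ 0 := mul_ne_zero (by norm_num) hz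
  have h16 : HasDerivAt (fun z : ℝ => 16*z) 16 z := by
    simpa using (hasDerivAt_id z).const_mul (16:ℝ)
  exact ⟨(hasDerivAt_E hz' hm0).comp z h16, (hasDerivAt_K hz' hm0).comp z h16⟩

lemma hasDerivAt_genFnM (hz : z ≠ 0) (hz' : 16 * z < 1) :
    HasDerivAt genFnM (MD1 z) z := by
  obtain ⟨hE, hK⟩ := basicderivs hz hz'
  have hπ := Real.pi_ne_zero
  have hπp := Real.pi_pos
  have hm0 : (16:ℝ)*z ≠ 0 := mul_ne_zero (by norm_num) hz
  have hm1 : (1:ℝ) - 16*z ≠ 0 := by linarith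
  have hπz : HasDerivAt (fun z : ℝ => Real.pi * z) (Real.pi * 1) z :=
    (hasDerivAt_id z).const_mul Real.pi
  have h2πz : HasDerivAt (fun z : ℝ => 2 * Real.pi * z) (2 * Real.pi * 1) z :=
    (hasDerivAt_id z).const_mul (2 * Real.pi)
  have hnum2 : HasDerivAt (fun z : ℝ => 1 - 16*z) (-16) z := by
    simpa using (((hasDerivAt_id z).const_mul (16:ℝ)).const_sub 1)
  have h4z : HasDerivAt (fun z : ℝ => 4*z) (4*1) z := (hasDerivAt_id z).const_mul 4
  have ha := (hasDerivAt_const z (1:ℝ)).div hπz (mul_ne_zero hπ hz)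
  have hb := hnum2.div h2πz (mul_ne_zero (by positivity) hz)
  have hc := (hasDerivAt_const z (1:ℝ)).div h4z (mul_ne_zero (by norm_num) hz)
  have h := ((ha.mul hE).sub (hb.mul hK)).sub hc
  have hgen : genFnM = fun z : ℝ =>
      1 / (Real.pi * z) * ellipticE (16*z) - (1 - 16*z) / (2 * Real.pi * z) * ellipticK (16*z)
        - 1 / (4*z) := by
    funext x
    simp [genFnM]
  rw [hgen]
  refine h.congr_deriv ?_
  symm
  unfold MD1
  simp only [Pi.div_apply]
  field_simp
  ring

lemma hasDerivAt_MD1 (hz : z ≠ 0) (hz' : 16 * z < 1) :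
    HasDerivAt MD1 (MD2 z) z := by
  obtain ⟨hE, hK⟩ := basicderivs hz hz'
  have hπ := Real.pi_ne_zero
  have hπp := Real.pi_pos
  have hm0 : (16:ℝ)*z ≠ 0 := mul_ne_zero (by norm_num) hz
  have hm1 : (1:ℝ) - 16*z ≠ 0 := by linarith
  have hnum2 : HasDerivAt (fun z : ℝ => 1 - 16*z) (-16) z := by
    simpa using (((hasDerivAt_id z).const_mul (16:ℝ)).const_sub 1)
  have hnum : HasDerivAt (fun z : ℝ => -3 * ellipticE (16*z) + (1 - 16*z) * ellipticK (16*z))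
      (-3 * ((ellipticE (16*z) - ellipticK (16*z)) / (2*(16*z)) * 16) +
        ((-16) * ellipticK (16*z) + (1 - 16*z) *
          ((ellipticE (16*z) - (1 - 16*z) * ellipticK (16*z)) / (2*(16*z)*(1 - 16*z)) * 16))) z :=
    (hE.const_mul (-3)).add (hnum2.mul hK)
  have hden : HasDerivAt (fun z : ℝ => 4 * Real.pi * z^2) (4 * Real.pi * (2 * z^1)) z :=
    (hasDerivAt_pow 2 z).const_mul (4 * Real.pi)
  have hden2 : HasDerivAt (fun z : ℝ => 4 * z^2) (4 * (2 * z^1)) z :=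
    (hasDerivAt_pow 2 z).const_mul 4
  have h := (hnum.div hden (by positivity)).add
    ((hasDerivAt_const z (1:ℝ)).div hden2 (by positivity))
  have hgen : MD1 = fun z : ℝ =>
      (-3 * ellipticE (16*z) + (1 - 16*z) * ellipticK (16*z)) / (4 * Real.pi * z^2) + 1/(4*z^2) := rfl
  rw [hgen]
  refine h.congr_deriv ?_
  symm
  unfold MD2
  field_simp
  ring

end assemble

/-- The function `M(z) = (1/πz)E(16z) − ((1−16z)/2πz)K(16z) − 1/4z` satisfies the ODE
`z²(1−16z)M'' + z(3−32z)M' + (1−4z)M = 1` (for `z ≠ 0`, `16z < 1`). -/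
theorem genFnM_ode (z : ℝ) (hz : z ≠ 0) (hz' : 16 * z < 1) :
    z ^ 2 * (1 - 16 * z) * deriv (deriv genFnM) z +
      z * (3 - 32 * z) * deriv genFnM z + (1 - 4 * z) * genFnM z = 1 := by
  have hU : IsOpen {x : ℝ | x ≠ 0 ∧ 16 * x < 1} := by
    have : {x : ℝ | x ≠ 0 ∧ 16 * x < 1} = {x | x ≠ 0} ∩ {x | 16 * x < 1} := rfl
    rw [this]
    exact isOpen_ne.inter (isOpen_lt (by fun_prop) continuous_const)
  have hmem : {x : ℝ | x ≠ 0 ∧ 16 * x < 1} ∈ nhds z := hU.mem_nhds ⟨hz, hz'⟩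
  have heq : deriv genFnM =ᶠ[nhds z] MD1 :=
    Filter.eventuallyEq_of_mem hmem fun x hx => (hasDerivAt_genFnM hx.1 hx.2).deriv
  have hd1 : deriv genFnM z = MD1 z := (hasDerivAt_genFnM hz hz').deriv
  have hd2 : deriv (deriv genFnM) z = MD2 z := by
    rw [heq.deriv_eq]
    exact (hasDerivAt_MD1 hz hz').deriv
  rw [hd1, hd2]
  have hπ := Real.pi_ne_zero
  unfold MD1 MD2 genFnM
  field_simp
  ring
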